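/- Let 0 ≤ ℓ < θ ≤ b < r ≤ n be integers and let f be a two-step function on (ℓ, r]: f_t = μ₀ for ℓ < t ≤ θ and f_t = μ₀ + d for θ < t ≤ r. Then the CUSUM F_{ℓ,b,r} of f equals −√((b−ℓ)(r−b)/(r−ℓ)) · (θ−ℓ)d/(b−ℓ), and in particular |F_{ℓ,b,r}| ≤ √(d² · min(θ−ℓ, r−θ)). -/

import Mathlib

open Finset

/-- CUSUM statistic of a sequence over `(s, e]` at split point `b`. -/
noncomputable def cusum (f : ℕ → ℝ) (s b e : ℕ) : ℝ :=
  Real.sqrt (((b : ℝ) - s) * ((e : ℝ) - b) / ((e : ℝ) - s)) *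
    ((∑ t ∈ Finset.Icc (s + 1) b, f t) / ((b : ℝ) - s) -
      (∑ t ∈ Finset.Icc (b + 1) e, f t) / ((e : ℝ) - b))

/-- For a two-step function on `(ℓ, r]` with jump `d` at `θ` and split `b ≥ θ`,
the CUSUM equals `-√((b-ℓ)(r-b)/(r-ℓ))·(θ-ℓ)d/(b-ℓ)`, and in particular is
bounded in modulus by `√(d²·min(θ-ℓ, r-θ))`. -/
theorem stmt_12 (n l θ b r : ℕ) (hlθ : l < θ) (hθb : θ ≤ b) (hbr : b < r)
    (hrn : r ≤ n) (μ₀ d : ℝ) (f : ℕ → ℝ)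
    (hf1 : ∀ t, l < t → t ≤ θ → f t = μ₀)
    (hf2 : ∀ t, θ < t → t ≤ r → f t = μ₀ + d) :
    cusum f l b r =
      -(Real.sqrt (((b : ℝ) - l) * ((r : ℝ) - b) / ((r : ℝ) - l)) *
        (((θ : ℝ) - l) * d / ((b : ℝ) - l))) ∧
    |cusum f l b r| ≤ Real.sqrt (d ^ 2 * min ((θ : ℝ) - l) ((r : ℝ) - θ)) := by
  have hlθ' : (l : ℝ) < θ := by exact_mod_cast hlθ
  have hθb' : (θ : ℝ) ≤ b := by exact_mod_cast hθb
  have hbr' : (b : ℝ) < r := by exact_mod_cast hbr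
  have hbl : (0 : ℝ) < (b : ℝ) - l := by linarith
  have hrb : (0 : ℝ) < (r : ℝ) - b := by linarith
  have hrl : (0 : ℝ) < (r : ℝ) - l := by linarith
  have hθl : (0 : ℝ) < (θ : ℝ) - l := by linarith
  have hrθ : (0 : ℝ) < (r : ℝ) - θ := by linarith
  -- sums
  have hsum1 : (∑ t ∈ Finset.Icc (l + 1) b, f t)
      = ((θ : ℝ) - l) * μ₀ + ((b : ℝ) - θ) * (μ₀ + d) := by
    rw [Finset.Icc_add_one_left_eq_Ioc, ← Finset.sum_Ioc_consecutive f (le_of_lt hlθ) hθb]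
    rw [Finset.sum_congr rfl (fun t ht => hf1 t (Finset.mem_Ioc.1 ht).1 (Finset.mem_Ioc.1 ht).2),
        Finset.sum_congr rfl (fun t ht => hf2 t (Finset.mem_Ioc.1 ht).1
          (le_trans (Finset.mem_Ioc.1 ht).2 (le_of_lt hbr))),
        Finset.sum_const, Finset.sum_const, Nat.card_Ioc, Nat.card_Ioc, nsmul_eq_mul, nsmul_eq_mul]
    push_cast [Nat.cast_sub (le_of_lt hlθ), Nat.cast_sub hθb]
    ring
  have hsum2 : (∑ t ∈ Finset.Icc (b + 1) r, f t) = ((r : ℝ) - b) * (μ₀ + d) := by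
    rw [Finset.Icc_add_one_left_eq_Ioc,
        Finset.sum_congr rfl (fun t ht => hf2 t (lt_of_le_of_lt hθb (Finset.mem_Ioc.1 ht).1)
          (Finset.mem_Ioc.1 ht).2),
        Finset.sum_const, Nat.card_Ioc, nsmul_eq_mul]
    push_cast [Nat.cast_sub (le_of_lt hbr)]
    ring
  have heq : cusum f l b r =
      -(Real.sqrt (((b : ℝ) - l) * ((r : ℝ) - b) / ((r : ℝ) - l)) *
        (((θ : ℝ) - l) * d / ((b : ℝ) - l))) := by
    rw [cusum, hsum1, hsum2, neg_mul_eq_mul_neg]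
    congr 1
    field_simp
    ring
  refine ⟨heq, ?_⟩
  have hS : (0 : ℝ) ≤ ((b : ℝ) - l) * ((r : ℝ) - b) / ((r : ℝ) - l) := by positivity
  have hsq : (cusum f l b r) ^ 2 ≤ d ^ 2 * min ((θ : ℝ) - l) ((r : ℝ) - θ) := by
    rw [heq]
    rw [neg_pow, mul_pow, Real.sq_sqrt hS, show (-1 : ℝ) ^ 2 = 1 by norm_num, one_mul]
    have key : ((b : ℝ) - l) * ((r : ℝ) - b) / ((r : ℝ) - l) *
        (((θ : ℝ) - l) * d / ((b : ℝ) - l)) ^ 2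
        = d ^ 2 * ((((r : ℝ) - b) * ((θ : ℝ) - l) ^ 2) / (((r : ℝ) - l) * ((b : ℝ) - l))) := by
      field_simp
    rw [key]
    have hmin : (((r : ℝ) - b) * ((θ : ℝ) - l) ^ 2) / (((r : ℝ) - l) * ((b : ℝ) - l))
        ≤ min ((θ : ℝ) - l) ((r : ℝ) - θ) := by
      rw [le_min_iff]
      constructor
      · rw [div_le_iff₀ (by positivity)]
        nlinarith [mul_le_mul (show (r:ℝ)-b ≤ r-l by linarith) (show (θ:ℝ)-l ≤ b-l by linarith) hθl.le hrl.le, hθl.le, mul_pos hrl hbl]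
      · rw [div_le_iff₀ (by positivity)]
        nlinarith [mul_le_mul (show (r:ℝ)-b ≤ r-θ by linarith) (show ((θ:ℝ)-l)^2 ≤ (r-l)*(b-l) by nlinarith) (by positivity : (0:ℝ) ≤ ((θ:ℝ)-l)^2) hrθ.le]
    nlinarith [sq_nonneg d]
  calc |cusum f l b r| = Real.sqrt ((cusum f l b r) ^ 2) := (Real.sqrt_sq_eq_abs _).symm
    _ ≤ Real.sqrt (d ^ 2 * min ((θ : ℝ) - l) ((r : ℝ) - θ)) := Real.sqrt_le_sqrt hsq
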